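/- For d > 0, the Kazhdan-Lusztig polynomial of the uniform matroid U_{1,d} (the rank-d uniform matroid on d+1 elements, i.e., the cycle matroid of the (d+1)-cycle) is P_{U_{1,d}}(t) = \sum_{i \ge 0} (1/(i+1)) \binom{d-i-1}{i} \binom{d+1}{i} t^i. -/

import Mathlib

open Polynomial Finset

/-- A "pre-matroid": a finite ground set together with a rank function.
It is a matroid when `IsMatroid` holds. -/
structure PreMatroid (α : Type*) where
  E : Finset α
  r : Finset α → ℕ

namespace PreMatroid

variable {α : Type*} [DecidableEq α]

/-- The rank axioms for a rank function on the ground set `E`, extended to all finite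
sets by `r A = r (A ∩ E)`. -/
def IsMatroid (M : PreMatroid α) : Prop :=
  M.r ∅ = 0 ∧ (∀ A, M.r A ≤ A.card) ∧ (∀ A B, A ⊆ B → M.r A ≤ M.r B) ∧
    (∀ A B, M.r (A ∪ B) + M.r (A ∩ B) ≤ M.r A + M.r B) ∧ (∀ A, M.r (A ∩ M.E) = M.r A)

/-- The rank of a matroid. -/
def rk (M : PreMatroid α) : ℕ := M.r M.E

/-- The flats of a matroid: subsets of the ground set such that adding any new element of the
ground set increases the rank. -/
def flats (M : PreMatroid α) : Finset (Finset α) :=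
  M.E.powerset.filter fun F => ∀ e ∈ M.E, e ∉ F → M.r F < M.r (insert e F)

theorem subset_of_mem_flats {M : PreMatroid α} {F : Finset α} (hF : F ∈ M.flats) : F ⊆ M.E :=
  mem_powerset.mp (mem_filter.mp hF).1

/-- The Möbius function `μ(∅̂, F)` of the lattice of flats, where `∅̂` is the minimal flat:
`μ = 1` on the minimal flat, and on any other flat `F` it is minus the sum of the values of `μ`
on all flats strictly contained in `F`. -/
def mu (M : PreMatroid α) (F : Finset α) : ℤ :=
  if (M.flats.filter fun G => G ⊂ F).Nonempty then
    -∑ G ∈ (M.flats.filter fun G => G ⊂ F).attach, M.mu G.1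
  else 1
termination_by F.card
decreasing_by exact Finset.card_lt_card (Finset.mem_filter.mp G.2).2

/-- The characteristic polynomial `χ_M(t) = ∑_{F ∈ L(M)} μ(∅̂,F) t^{rk M - rk F}`. -/
noncomputable def charPoly (M : PreMatroid α) : Polynomial ℤ :=
  ∑ F ∈ M.flats, Polynomial.C (M.mu F) * Polynomial.X ^ (M.rk - M.r F)

/-- The localization `M_F`: the restriction of `M` to the flat `F`. -/
def loc (M : PreMatroid α) (F : Finset α) : PreMatroid α :=
  ⟨F, fun A => M.r (A ∩ F)⟩

/-- The contraction (restriction) `M^F` of `M` at the flat `F`, with ground set `E ∖ F` and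
rank function `A ↦ r (A ∪ F) - r F`. -/
def con (M : PreMatroid α) (F : Finset α) : PreMatroid α :=
  ⟨M.E \ F, fun A => M.r ((A ∩ (M.E \ F)) ∪ F) - M.r F⟩

theorem IsMatroid.con {M : PreMatroid α} (h : M.IsMatroid) {F : Finset α} (hF : F ⊆ M.E) :
    (M.con F).IsMatroid := by
  obtain ⟨h0, hle, hmono, hsub, hcomp⟩ := h
  refine ⟨?_, ?_, ?_, ?_, ?_⟩
  · show M.r ((∅ ∩ (M.E \ F)) ∪ F) - M.r F = 0
    simp
  · intro A
    show M.r ((A ∩ (M.E \ F)) ∪ F) - M.r F ≤ A.card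
    have h1 := hsub (A ∩ (M.E \ F)) F
    have h2 := hle (A ∩ (M.E \ F))
    have h3 : (A ∩ (M.E \ F)).card ≤ A.card := card_le_card inter_subset_left
    omega
  · intro A B hAB
    show M.r ((A ∩ (M.E \ F)) ∪ F) - M.r F ≤ M.r ((B ∩ (M.E \ F)) ∪ F) - M.r F
    have : (A ∩ (M.E \ F)) ∪ F ⊆ (B ∩ (M.E \ F)) ∪ F :=
      union_subset_union (inter_subset_inter hAB (Finset.Subset.refl _)) (Finset.Subset.refl _)
    exact Nat.sub_le_sub_right (hmono _ _ this) _
  · intro A B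
    set D := M.E \ F with hD
    show M.r (((A ∪ B) ∩ D) ∪ F) - M.r F + (M.r (((A ∩ B) ∩ D) ∪ F) - M.r F) ≤
      M.r ((A ∩ D) ∪ F) - M.r F + (M.r ((B ∩ D) ∪ F) - M.r F)
    have e1 : (A ∪ B) ∩ D ∪ F = ((A ∩ D) ∪ F) ∪ ((B ∩ D) ∪ F) := by
      ext x; simp; tauto
    have e2 : (A ∩ B) ∩ D ∪ F = ((A ∩ D) ∪ F) ∩ ((B ∩ D) ∪ F) := by
      ext x; simp; tauto
    have key := hsub ((A ∩ D) ∪ F) ((B ∩ D) ∪ F)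
    have m1 := hmono F ((A ∩ D) ∪ F) subset_union_right
    have m2 := hmono F ((B ∩ D) ∪ F) subset_union_right
    have m3 := hmono F ((A ∪ B) ∩ D ∪ F) subset_union_right
    have m4 := hmono F ((A ∩ B) ∩ D ∪ F) subset_union_right
    rw [← e1, ← e2] at key
    omega
  · intro A
    show M.r ((A ∩ (M.E \ F) ∩ (M.E \ F)) ∪ F) - M.r F = M.r ((A ∩ (M.E \ F)) ∪ F) - M.r F
    rw [inter_assoc, inter_self]

end PreMatroid

/-- The type of assignments, to each matroid (on any ground type), of a polynomial. -/
def KLfun : Type 1 := ∀ (α : Type) [DecidableEq α] (M : PreMatroid α), M.IsMatroid → Polynomial ℤ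

/-- The defining conditions of the Kazhdan-Lusztig polynomial of a matroid:
`P_M = 1` in rank zero, `deg P_M < (rk M)/2` in positive rank, and the defining recursion
`t^{rk M} P_M(1/t) = ∑_{F ∈ L(M)} χ_{M_F}(t) P_{M^F}(t)`. -/
def KLconds (P : KLfun) : Prop :=
  ∀ (α : Type) [DecidableEq α] (M : PreMatroid α) (h : M.IsMatroid),
    (M.rk = 0 → P α M h = 1) ∧
    (0 < M.rk → 2 * (P α M h).natDegree < M.rk) ∧
    ((P α M h).reflect M.rk =
      ∑ F ∈ M.flats.attach, (M.loc F.1).charPoly *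
        P α (M.con F.1) (h.con (PreMatroid.subset_of_mem_flats F.2)))

/-- The uniform matroid `U_{m,d}` of rank `d` on `m + d` elements, as a rank function. -/
def uniformPre (m d : ℕ) : PreMatroid ℕ :=
  ⟨Finset.range (m + d), fun A => min (A ∩ Finset.range (m + d)).card d⟩

theorem uniformPre_isMatroid (m d : ℕ) : (uniformPre m d).IsMatroid := by
  refine ⟨by simp [uniformPre], ?_, ?_, ?_, ?_⟩
  · intro A
    exact le_trans (Nat.min_le_left _ _) (card_le_card inter_subset_left)
  · intro A B hAB
    exact min_le_min (card_le_card (inter_subset_inter hAB (Finset.Subset.refl _))) le_rfl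
  · intro A B
    simp only [uniformPre]
    set E := Finset.range (m + d)
    have e1 : (A ∪ B) ∩ E = (A ∩ E) ∪ (B ∩ E) := by ext x; simp only [mem_inter, mem_union]; tauto
    have e2 : (A ∩ B) ∩ E = (A ∩ E) ∩ (B ∩ E) := by ext x; simp only [mem_inter]; tauto
    have key : ((A ∩ E) ∪ (B ∩ E)).card + ((A ∩ E) ∩ (B ∩ E)).card
        = (A ∩ E).card + (B ∩ E).card := card_union_add_card_inter _ _
    have m1 : (A ∩ E).card ≤ ((A ∩ E) ∪ (B ∩ E)).card := card_le_card subset_union_left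
    have m2 : (B ∩ E).card ≤ ((A ∩ E) ∪ (B ∩ E)).card := card_le_card subset_union_right
    rw [e1, e2]
    simp only [Nat.min_def]
    split_ifs <;> omega
  · intro A
    simp only [uniformPre]
    rw [inter_assoc, inter_self]

namespace KLaux

lemma choose_absorb (N s u : ℕ) :
    N.choose (s + u) * (s + u).choose s = N.choose s * (N - s).choose u := by
  rcases le_or_gt (s + u) N with h | h
  · have := Nat.choose_mul (n := N) (k := s + u) (s := s) (Nat.le_add_right _ _)
    simpa [Nat.add_sub_cancel_left] using this
  · have h1 : N.choose (s + u) = 0 := Nat.choose_eq_zero_of_lt h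
    rcases le_or_gt s N with hs | hs
    · have h2 : N - s < u := by omega
      rw [h1, Nat.choose_eq_zero_of_lt h2]; ring
    · rw [h1, Nat.choose_eq_zero_of_lt hs]; ring

lemma A1Z (n M : ℕ) :
    ∑ m ∈ range (M + 1), (-1 : ℤ) ^ m * ((n + 1).choose m : ℤ) = (-1) ^ M * (n.choose M : ℤ) := by
  induction M with
  | zero => simp
  | succ M ih =>
      rw [Finset.sum_range_succ, ih, Nat.choose_succ_succ (n) M]
      push_cast
      ring

lemma A1Q (n M : ℕ) :
    ∑ m ∈ range (M + 1), (-1 : ℚ) ^ m * ((n + 1).choose m : ℚ) = (-1) ^ M * (n.choose M : ℚ) := by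
  have := A1Z n M
  exact_mod_cast congrArg (fun z : ℤ => (z : ℚ)) this

lemma rowAltQ {B : ℕ} (hB : 1 ≤ B) :
    ∑ u ∈ range (B + 1), (-1 : ℚ) ^ u * (B.choose u : ℚ) = 0 := by
  obtain ⟨b, rfl⟩ : ∃ b, B = b + 1 := ⟨B - 1, by omega⟩
  rw [A1Q b (b + 1), Nat.choose_eq_zero_of_lt (by omega)]
  simp

lemma G_eq_one (m : ℕ) : ∀ B : ℕ, 1 ≤ B →
    ∑ u ∈ range B, (-1 : ℚ) ^ u * ((m + B).choose (m + 1 + u) : ℚ) * ((m + u).choose m : ℚ) = 1 := by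
  intro B
  induction B with
  | zero => omega
  | succ B ih =>
    intro _
    rcases Nat.eq_zero_or_pos B with h1 | hB
    · subst h1; simp
    have split : ∀ u : ℕ, ((m + (B + 1)).choose (m + 1 + u) : ℚ)
        = ((m + B).choose (m + u) : ℚ) + ((m + B).choose (m + u + 1) : ℚ) := by
      intro u
      have : m + (B + 1) = (m + B) + 1 := by ring
      rw [this]
      have : m + 1 + u = (m + u) + 1 := by ring
      rw [this, Nat.choose_succ_succ]
      push_cast; ring
    calc ∑ u ∈ range (B + 1), (-1 : ℚ) ^ u * ((m + (B+1)).choose (m + 1 + u) : ℚ) * ((m + u).choose m : ℚ)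
        = (∑ u ∈ range (B + 1), (-1 : ℚ) ^ u * ((m + B).choose (m + u) : ℚ) * ((m + u).choose m : ℚ))
          + ∑ u ∈ range (B + 1), (-1 : ℚ) ^ u * ((m + B).choose (m + 1 + u) : ℚ) * ((m + u).choose m : ℚ) := by
          rw [← Finset.sum_add_distrib]
          refine Finset.sum_congr rfl fun u _ => ?_
          rw [split u]
          have : m + u + 1 = m + 1 + u := by ring
          rw [this]; ring
      _ = 0 + 1 := by
          congr 1
          · -- absorption part
            have habs : ∀ u : ℕ, ((m + B).choose (m + u) : ℚ) * ((m + u).choose m : ℚ)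
                = ((m + B).choose m : ℚ) * (B.choose u : ℚ) := by
              intro u
              have := choose_absorb (m + B) m u
              have h2 : m + B - m = B := by omega
              rw [h2] at this
              exact_mod_cast congrArg (fun z : ℕ => (z : ℚ)) this
            have : ∑ u ∈ range (B + 1), (-1 : ℚ) ^ u * ((m + B).choose (m + u) : ℚ) * ((m + u).choose m : ℚ)
                = ((m + B).choose m : ℚ) * ∑ u ∈ range (B + 1), (-1 : ℚ) ^ u * (B.choose u : ℚ) := by
              rw [Finset.mul_sum]
              refine Finset.sum_congr rfl fun u _ => ?_
              rw [mul_assoc, habs u]; ring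
            rw [this, rowAltQ hB, mul_zero]
          · -- tail term vanishes, then IH
            rw [Finset.sum_range_succ]
            have hz : ((m + B).choose (m + 1 + B) : ℚ) = 0 := by
              rw [Nat.choose_eq_zero_of_lt (by omega)]; simp
            rw [hz]
            simpa using ih hB
      _ = 1 := by ring

lemma F_eq (m : ℕ) : ∀ B : ℕ,
    ∑ u ∈ range B, (-1 : ℚ) ^ u * ((m + B + 1).choose (m + 2 + u) : ℚ) * ((m + u).choose m : ℚ) = B := by
  intro B
  induction B with
  | zero => simp
  | succ B ih =>
    have split : ∀ u : ℕ, ((m + (B + 1) + 1).choose (m + 2 + u) : ℚ)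
        = ((m + B + 1).choose (m + 1 + u) : ℚ) + ((m + B + 1).choose (m + 2 + u) : ℚ) := by
      intro u
      have h1 : m + (B + 1) + 1 = (m + B + 1) + 1 := by ring
      have h2 : m + 2 + u = (m + 1 + u) + 1 := by ring
      rw [h1, h2, Nat.choose_succ_succ]
      have h3 : (m + 1 + u).succ = m + 2 + u := by omega
      rw [h3]
      push_cast; ring
    calc ∑ u ∈ range (B + 1), (-1:ℚ) ^ u * ((m + (B+1) + 1).choose (m + 2 + u) : ℚ) * ((m + u).choose m : ℚ)
        = (∑ u ∈ range (B + 1), (-1:ℚ) ^ u * ((m + (B+1)).choose (m + 1 + u) : ℚ) * ((m + u).choose m : ℚ))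
          + ∑ u ∈ range (B + 1), (-1:ℚ) ^ u * ((m + B + 1).choose (m + 2 + u) : ℚ) * ((m + u).choose m : ℚ) := by
          rw [← Finset.sum_add_distrib]
          refine Finset.sum_congr rfl fun u _ => ?_
          rw [split u]
          have : m + (B + 1) = m + B + 1 := by ring
          rw [this]; ring
      _ = 1 + B := by
          congr 1
          · exact G_eq_one m (B + 1) (by omega)
          · rw [Finset.sum_range_succ]
            have hz : ((m + B + 1).choose (m + 2 + B) : ℚ) = 0 := by
              rw [Nat.choose_eq_zero_of_lt (by omega)]; simp
            rw [hz]
            simpa using ih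
      _ = (B + 1 : ℕ) := by push_cast; ring


/-- The claimed KL coefficient of `U_{1,d}`. -/
noncomputable def fQ (d i : ℕ) : ℚ := ((d + 1).choose i : ℚ) * ((d - i - 1).choose i : ℚ) / (i + 1)

lemma fQ_zero {d i : ℕ} (h : d ≤ 2 * i) (hd : 1 ≤ d ∨ 1 ≤ i) : fQ d i = 0 := by
  have : (d - i - 1).choose i = 0 := Nat.choose_eq_zero_of_lt (by omega)
  rw [fQ, this]
  simp

lemma neg_one_pow_sub {a b : ℕ} (h : b ≤ a) : (-1 : ℚ) ^ (a - b) = (-1) ^ a * (-1) ^ b := by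
  have h2 : a + b = (a - b) + 2 * b := by omega
  have : (-1 : ℚ) ^ a * (-1) ^ b = (-1 : ℚ) ^ (a + b) := by rw [pow_add]
  rw [this, h2, pow_add, pow_mul]
  norm_num

/-- The collapsed inner sum. -/
lemma TC (m E : ℕ) (h2m : 2 * m ≤ E) :
    ∑ s ∈ range E, (-1 : ℚ) ^ s * ((E + 1).choose s : ℚ) * fQ (E - s) m
      = (-1) ^ E * (((E + 1).choose m : ℚ) - ((E + 1).choose (m + 1) : ℚ)) := by
  rcases Nat.eq_zero_or_pos E with hE0 | hE1
  · subst hE0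
    have hm : m = 0 := by omega
    subst hm
    simp
  have key : ∀ j ∈ range E, (-1 : ℚ) ^ (E - 1 - j) * ((E + 1).choose (E - 1 - j) : ℚ) * fQ (E - (E - 1 - j)) m
      = (-1) ^ (E - 1) * ((-1) ^ j * ((E + 1).choose (j + 2) : ℚ) * fQ (j + 1) m) := by
    intro j hj
    have hjE : j < E := mem_range.mp hj
    have e1 : E - (E - 1 - j) = j + 1 := by omega
    have e2 : ((E + 1).choose (E - 1 - j) : ℚ) = ((E + 1).choose (j + 2) : ℚ) := by
      have : E + 1 - (j + 2) = E - 1 - j := by omega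
      rw [← this, Nat.choose_symm (by omega)]
    have e3 : (-1 : ℚ) ^ (E - 1 - j) = (-1) ^ (E - 1) * (-1) ^ j := neg_one_pow_sub (by omega)
    rw [e1, e2, e3]
    ring
  rw [← Finset.sum_range_reflect, Finset.sum_congr rfl key, ← Finset.mul_sum]
  -- split the sum at 2m
  obtain ⟨B, hB⟩ : ∃ B, E = 2 * m + B := ⟨E - 2 * m, by omega⟩
  subst hB
  rw [Finset.sum_range_add]
  have z1 : ∑ j ∈ range (2 * m), (-1 : ℚ) ^ j * ((2*m+B + 1).choose (j + 2) : ℚ) * fQ (j + 1) m = 0 := by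
    refine Finset.sum_eq_zero fun j hj => ?_
    have : fQ (j + 1) m = 0 := fQ_zero (by have := mem_range.mp hj; omega) (Or.inl (by omega))
    rw [this]; ring
  rw [z1, zero_add]
  have key2 : ∀ u ∈ range B, (-1 : ℚ) ^ (2*m + u) * ((2*m+B + 1).choose (2*m + u + 2) : ℚ) * fQ (2*m + u + 1) m
      = (((2*m+B+1).choose m : ℚ) / (m + 1)) * ((-1 : ℚ) ^ u * ((m + B + 1).choose (m + 2 + u) : ℚ) * ((m + u).choose m : ℚ)) := by
    intro u hu
    have e1 : (-1 : ℚ) ^ (2*m + u) = (-1) ^ u := by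
      rw [pow_add, pow_mul]
      norm_num
    have e2 : fQ (2*m + u + 1) m = ((2*m + u + 2).choose m : ℚ) * ((m + u).choose m : ℚ) / (m + 1) := by
      have h9 : 2*m + u + 1 - m - 1 = m + u := by omega
      have h10 : 2*m + u + 1 + 1 = 2*m + u + 2 := by omega
      rw [fQ, h9, h10]
    have e3n : (2*m+B + 1).choose (2*m + u + 2) * (2*m + u + 2).choose m
        = (2*m+B+1).choose m * (m + B + 1).choose (m + 2 + u) := by
      have h4 : 2*m + u + 2 = m + (m + u + 2) := by omega
      have h5 : 2*m + B + 1 - m = m + B + 1 := by omega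
      have h6 : m + 2 + u = m + u + 2 := by omega
      rw [h4, choose_absorb, h5, h6]
    have e3 : ((2*m+B + 1).choose (2*m + u + 2) : ℚ) * ((2*m + u + 2).choose m : ℚ)
        = ((2*m+B+1).choose m : ℚ) * ((m + B + 1).choose (m + 2 + u) : ℚ) := by
      exact_mod_cast congrArg (fun z : ℕ => (z : ℚ)) e3n
    rw [e1, e2]
    have hm1 : ((m : ℚ) + 1) ≠ 0 := by positivity
    field_simp
    linear_combination ((m + u).choose m : ℚ) * e3
  rw [Finset.sum_congr rfl key2, ← Finset.mul_sum, F_eq]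
  -- now pure algebra
  have habs : ((2*m+B+1).choose (m + 1) : ℚ) * (m + 1) = ((2*m+B+1).choose m : ℚ) * (m + B + 1) := by
    have := Nat.choose_succ_right_eq (2*m+B+1) m
    have h5 : 2*m + B + 1 - m = m + B + 1 := by omega
    rw [h5] at this
    exact_mod_cast congrArg (fun z : ℕ => (z : ℚ)) this
  have hm1 : ((m : ℚ) + 1) ≠ 0 := by positivity
  have hneg : (-1:ℚ)^(2*m+B) = -((-1:ℚ)^(2*m+B-1)) := by
    have hX : (2*m + B - 1) + 1 = 2*m + B := by omega
    have hp := pow_succ (-1:ℚ) (2*m+B-1)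
    rw [hX] at hp
    rw [hp]
    ring
  rw [hneg]
  field_simp
  linear_combination (-(1:ℚ)) * habs

/-- `gg E m` is the collapsed value `(-1)^E * T'(m)`. -/
noncomputable def gg (E m : ℕ) : ℚ :=
  if 2 * m ≤ E then ((E + 1).choose m : ℚ) - ((E + 1).choose (m + 1) : ℚ) else 0

/-- coefficient of `X^n` in the characteristic polynomial `chi_d`. -/
noncomputable def chiC (d n : ℕ) : ℚ :=
  if n = 0 then (-1) ^ d * d else (-1) ^ (d - n) * ((d + 1).choose (d - n) : ℚ)

lemma symm_choose {N k : ℕ} (h : k ≤ N) : N.choose (N - k) = N.choose k :=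
  Nat.choose_symm h

lemma absA {d n m : ℕ} (hm : m ≤ n) (hn : n ≤ d) (hn1 : 1 ≤ n) :
    ((d + 1).choose (n - m) : ℚ) * ((d - n + 1 + m).choose m : ℚ)
      = ((d + 1).choose n : ℚ) * (n.choose m : ℚ) := by
  have key : (d + 1).choose (n - m) * (d - n + 1 + m).choose m = (d + 1).choose n * n.choose m := by
    have e1 : (d + 1).choose (n - m) = (d + 1).choose (d - n + 1 + m) := by
      have h5 := symm_choose (show d - n + 1 + m ≤ d + 1 by omega)
      have h6 : d + 1 - (d - n + 1 + m) = n - m := by omega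
      rw [h6] at h5
      exact h5
    have h2 := choose_absorb (d + 1) m (d - n + 1)
    have h7 : m + (d - n + 1) = d - n + 1 + m := by omega
    rw [h7] at h2
    have h1 := choose_absorb (d + 1) m (n - m)
    have h8 : m + (n - m) = n := by omega
    rw [h8] at h1
    have e6 : (d + 1 - m).choose (d - n + 1) = (d + 1 - m).choose (n - m) := by
      have h9 := symm_choose (show n - m ≤ d + 1 - m by omega)
      have h10 : d + 1 - m - (n - m) = d - n + 1 := by omega
      rw [h10] at h9
      exact h9
    rw [e1, h2, e6, ← h1]
  exact_mod_cast congrArg (fun z : ℕ => (z : ℚ)) key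

lemma absB {d n m : ℕ} (hm : m ≤ n) (hn : n ≤ d) (hn1 : 1 ≤ n) :
    ((d + 1).choose (n - m) : ℚ) * ((d - n + 1 + m).choose (m + 1) : ℚ)
      = ((d + 1).choose (d - n) : ℚ) * ((n + 1).choose (m + 1) : ℚ) := by
  have key : (d + 1).choose (n - m) * (d - n + 1 + m).choose (m + 1)
      = (d + 1).choose (d - n) * (n + 1).choose (m + 1) := by
    have e1 : (d + 1).choose (n - m) = (d + 1).choose (d - n + 1 + m) := by
      have h5 := symm_choose (show d - n + 1 + m ≤ d + 1 by omega)
      have h6 : d + 1 - (d - n + 1 + m) = n - m := by omega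
      rw [h6] at h5
      exact h5
    have h1 := choose_absorb (d + 1) (d - n) (m + 1)
    have e6 : d + 1 - (d - n) = n + 1 := by omega
    have eK : d - n + (m + 1) = d - n + 1 + m := by omega
    rw [eK, e6] at h1
    rw [e1, ← h1]
    congr 1
    have h3 : d - n + 1 + m - (m + 1) = d - n := by omega
    have h4 := symm_choose (show m + 1 ≤ d - n + 1 + m by omega)
    rw [h3] at h4
    exact h4.symm
  exact_mod_cast congrArg (fun z : ℕ => (z : ℚ)) key

lemma PIQ {d i : ℕ} (h2i : 2 * i < d) :
    ((d + 1).choose (d - i) : ℚ) * ((d - i - 1).choose i : ℚ)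
      - ((d + 1).choose i : ℚ) * ((d - i).choose (i + 1) : ℚ) = fQ d i := by
  have e1 : ((d + 1).choose (d - i) : ℚ) = ((d + 1).choose (i + 1) : ℚ) := by
    have h2 : d + 1 - (i + 1) = d - i := by omega
    rw [← h2]
    exact_mod_cast congrArg (fun z : ℕ => (z : ℚ)) (Nat.choose_symm (by omega : i + 1 ≤ d + 1))
  have e2 : ((d + 1).choose (i + 1) : ℚ) * (i + 1) = ((d + 1).choose i : ℚ) * (d + 1 - i) := by
    have := Nat.choose_succ_right_eq (d + 1) i
    have h3 : ((d + 1 - i : ℕ) : ℚ) = (d : ℚ) + 1 - i := by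
      push_cast [Nat.cast_sub (by omega : i ≤ d + 1)]
      ring
    calc ((d + 1).choose (i + 1) : ℚ) * (i + 1)
        = (((d + 1).choose (i + 1) * (i + 1) : ℕ) : ℚ) := by push_cast; ring
      _ = (((d + 1).choose i * (d + 1 - i) : ℕ) : ℚ) := by rw [this]
      _ = _ := by push_cast [Nat.cast_sub (by omega : i ≤ d + 1)]; ring
  have e3 : ((d - i).choose (i + 1) : ℚ) * (i + 1) = ((d - i : ℕ) : ℚ) * ((d - i - 1).choose i : ℚ) := by
    have h4 : d - i - 1 + 1 = d - i := by omega
    have := Nat.add_one_mul_choose_eq (d - i - 1) i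
    rw [h4] at this
    calc ((d - i).choose (i + 1) : ℚ) * (i + 1)
        = (((d - i).choose (i + 1) * (i + 1) : ℕ) : ℚ) := by push_cast; ring
      _ = (((d - i) * (d - i - 1).choose i : ℕ) : ℚ) := by
          rw [← this]
      _ = _ := by push_cast; ring
  have hi1 : ((i : ℚ) + 1) ≠ 0 := by positivity
  rw [fQ, e1]
  have hdi : ((d - i : ℕ) : ℚ) = (d : ℚ) - i := by
    push_cast [Nat.cast_sub (by omega : i ≤ d)]
    ring
  field_simp
  rw [hdi] at e3
  nlinarith [e2, e3]

/-- The master coefficient identity. -/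
lemma mainId {d n : ℕ} (hd : 1 ≤ d) (hn : n ≤ d) :
    (∑ m ∈ range (n + 1),
        ((d + 1).choose (n - m) : ℚ) * ((-1) ^ (d - n + m) * gg (d - n + m) m)) + chiC d n
      = fQ d (d - n) := by
  rcases Nat.eq_zero_or_pos n with hn0 | hn1
  · subst hn0
    rw [Finset.sum_range_one]
    simp only [Nat.sub_zero, Nat.add_zero, Nat.choose_zero_right, chiC, if_pos rfl]
    rw [gg, if_pos (by omega), fQ_zero (by omega) (Or.inl hd), Nat.choose_zero_right,
      Nat.choose_one_right]
    push_cast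
    ring
  -- n ≥ 1
  set i := d - n with hi
  set Ms := min n i with hMs
  have hsub : ∑ m ∈ range (n + 1),
        ((d + 1).choose (n - m) : ℚ) * ((-1) ^ (d - n + m) * gg (d - n + m) m)
      = ∑ m ∈ range (Ms + 1),
        ((d + 1).choose (n - m) : ℚ) * ((-1) ^ (i + m) * gg (i + m) m) := by
    rw [← hi]
    refine (Finset.sum_subset (by intro x hx; simp only [mem_range] at *; omega) ?_).symm
    intro m hm hm2
    simp only [mem_range] at hm hm2
    have : ¬ (2 * m ≤ i + m) := by omega
    rw [gg, if_neg this]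
    ring
  rw [hsub]
  have hgg : ∀ m ∈ range (Ms + 1), ((d + 1).choose (n - m) : ℚ) * ((-1) ^ (i + m) * gg (i + m) m)
      = (-1 : ℚ) ^ i * ((-1) ^ m * (((d + 1).choose (n - m) : ℚ) * ((i + m + 1).choose m : ℚ))
          - (-1) ^ m * (((d + 1).choose (n - m) : ℚ) * ((i + m + 1).choose (m + 1) : ℚ))) := by
    intro m hm
    simp only [mem_range] at hm
    rw [gg, if_pos (by omega), pow_add]
    ring
  rw [Finset.sum_congr rfl hgg, ← Finset.mul_sum, Finset.sum_sub_distrib]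
  have hA : ∀ m ∈ range (Ms + 1), (-1 : ℚ) ^ m * (((d + 1).choose (n - m) : ℚ) * ((i + m + 1).choose m : ℚ))
      = ((d + 1).choose n : ℚ) * ((-1) ^ m * (n.choose m : ℚ)) := by
    intro m hm
    simp only [mem_range] at hm
    have h5 : i + m + 1 = d - n + 1 + m := by omega
    rw [h5, absA (by omega) hn hn1]
    ring
  have hB : ∀ m ∈ range (Ms + 1), (-1 : ℚ) ^ m * (((d + 1).choose (n - m) : ℚ) * ((i + m + 1).choose (m + 1) : ℚ))
      = ((d + 1).choose (d - n) : ℚ) * ((-1) ^ m * ((n + 1).choose (m + 1) : ℚ)) := by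
    intro m hm
    simp only [mem_range] at hm
    have h5 : i + m + 1 = d - n + 1 + m := by omega
    rw [h5, absB (by omega) hn hn1]
    ring
  rw [Finset.sum_congr rfl hA, Finset.sum_congr rfl hB, ← Finset.mul_sum, ← Finset.mul_sum]
  -- partial alternating sums
  have hApart : ∑ m ∈ range (Ms + 1), (-1 : ℚ) ^ m * (n.choose m : ℚ) = (-1) ^ Ms * ((n - 1).choose Ms : ℚ) := by
    have h6 : n - 1 + 1 = n := by omega
    have := A1Q (n - 1) Ms
    rw [h6] at this
    exact this
  have hBpart : ∑ m ∈ range (Ms + 1), (-1 : ℚ) ^ m * ((n + 1).choose (m + 1) : ℚ)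
      = 1 + (-1) ^ Ms * (n.choose (Ms + 1) : ℚ) := by
    have h7 := A1Q n (Ms + 1)
    rw [Finset.sum_range_succ'] at h7
    simp only [Nat.choose_zero_right, pow_zero] at h7
    have h8 : ∀ m, (-1 : ℚ) ^ (m + 1) * ((n + 1).choose (m + 1) : ℚ)
        = -((-1 : ℚ) ^ m * ((n + 1).choose (m + 1) : ℚ)) := by
      intro m
      rw [pow_succ]
      ring
    rw [Finset.sum_congr rfl (fun m _ => h8 m), Finset.sum_neg_distrib] at h7
    have h9 : (-1 : ℚ) ^ (Ms + 1) = -(-1 : ℚ) ^ Ms := by rw [pow_succ]; ring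
    rw [h9] at h7
    push_cast at h7
    linear_combination -h7
  rw [hApart, hBpart]
  have hchi : chiC d n = (-1 : ℚ) ^ i * ((d + 1).choose (d - n) : ℚ) := by
    rw [chiC, if_neg (by omega), hi]
  rw [hchi]
  rcases le_or_gt n i with hni | hni
  · -- regime n ≤ i : everything cancels, fQ = 0
    have hMn : Ms = n := by omega
    have z1 : ((n - 1).choose Ms : ℚ) = 0 := by
      rw [hMn, Nat.choose_eq_zero_of_lt (by omega)]
      simp
    have z2 : (n.choose (Ms + 1) : ℚ) = 0 := by
      rw [hMn, Nat.choose_eq_zero_of_lt (by omega)]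
      simp
    rw [z1, z2, fQ_zero (by omega) (Or.inl hd)]
    ring
  · -- regime i < n
    have hMi : Ms = i := by omega
    have h2i : 2 * i < d := by omega
    have hfq := PIQ h2i
    have hdn : d - (d - n) = n := by omega
    rw [hMi]
    have hni' : n - 1 = d - i - 1 := by omega
    have hnn : (n.choose (i + 1) : ℚ) = ((d - i).choose (i + 1) : ℚ) := by
      have : n = d - i := by omega
      rw [this]
    have hdd : ((d + 1).choose n : ℚ) = ((d + 1).choose (d - i) : ℚ) := by
      have : n = d - i := by omega
      rw [this]
    have hdn2 : ((d + 1).choose (d - n) : ℚ) = ((d + 1).choose i : ℚ) := by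
      have : d - n = i := by omega
      rw [this]
    rw [hni', hnn, hdd, hdn2]
    have hpow : (-1 : ℚ) ^ i * (-1 : ℚ) ^ i = 1 := by
      rw [← pow_add]
      have : i + i = 2 * i := by ring
      rw [this, pow_mul]
      norm_num
    calc (-1 : ℚ) ^ i * (((d + 1).choose (d - i) : ℚ) * ((-1) ^ i * ((d - i - 1).choose i : ℚ))
          - ((d + 1).choose i : ℚ) * (1 + (-1) ^ i * ((d - i).choose (i + 1) : ℚ)))
          + (-1 : ℚ) ^ i * ((d + 1).choose i : ℚ)
        = ((-1 : ℚ) ^ i * (-1 : ℚ) ^ i) * (((d + 1).choose (d - i) : ℚ) * ((d - i - 1).choose i : ℚ)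
            - ((d + 1).choose i : ℚ) * ((d - i).choose (i + 1) : ℚ)) := by ring
      _ = fQ d i := by rw [hpow, hfq]; ring

/-- The claimed KL polynomial over `ℚ`. -/
noncomputable def QQ (d : ℕ) : ℚ[X] := ∑ i ∈ range (d + 1), C (fQ d i) * X ^ i

/-- The characteristic polynomial of `U_{1,d}` over `ℚ`. -/
noncomputable def chiQ (d : ℕ) : ℚ[X] :=
  (∑ j ∈ range d, C ((-1) ^ j * ((d + 1).choose j : ℚ)) * X ^ (d - j)) + C ((-1) ^ d * (d : ℚ))

lemma fQ_big {d n : ℕ} (h : d < n) : fQ d n = 0 := by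
  apply fQ_zero (by omega)
  omega

lemma QQ_coeff (d n : ℕ) : (QQ d).coeff n = fQ d n := by
  rw [QQ, finset_sum_coeff]
  rcases le_or_gt n d with h | h
  · rw [Finset.sum_eq_single n
      (fun b _ hb => by rw [coeff_C_mul, coeff_X_pow, if_neg (Ne.symm hb), mul_zero])
      (fun hn => absurd (mem_range.mpr (by omega)) hn)]
    simp
  · rw [Finset.sum_eq_zero (fun b hb => by
      simp only [mem_range] at hb
      rw [coeff_C_mul, coeff_X_pow, if_neg (by omega : ¬ n = b), mul_zero]), fQ_big h]

lemma chiQ_coeff {d n : ℕ} (hd : 1 ≤ d) (hn : n ≤ d) : (chiQ d).coeff n = chiC d n := by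
  rw [chiQ, coeff_add, finset_sum_coeff]
  rcases Nat.eq_zero_or_pos n with h0 | h1
  · subst h0
    rw [chiC, if_pos rfl, Finset.sum_eq_zero (fun j hj => by
      simp only [mem_range] at hj
      rw [coeff_C_mul, coeff_X_pow, if_neg (by omega : ¬ (0 : ℕ) = d - j), mul_zero])]
    rw [zero_add, coeff_C, if_pos rfl]
  · rw [chiC, if_neg (by omega)]
    rw [Finset.sum_eq_single (d - n)
      (fun j hj hjn => by
        simp only [mem_range] at hj
        rw [coeff_C_mul, coeff_X_pow, if_neg (by omega : ¬ n = d - j), mul_zero])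
      (fun hdn => absurd (mem_range.mpr (by omega)) hdn)]
    rw [coeff_C_mul, coeff_X_pow, if_pos (by omega : n = d - (d - n)), coeff_C,
      if_neg (by omega : ¬ n = 0)]
    ring

lemma chiQ_coeff_big {d n : ℕ} (hn : d < n) : (chiQ d).coeff n = 0 := by
  rw [chiQ, coeff_add, finset_sum_coeff, Finset.sum_eq_zero (fun j hj => by
    simp only [mem_range] at hj
    rw [coeff_C_mul, coeff_X_pow, if_neg (by omega : ¬ n = d - j), mul_zero])]
  rw [coeff_C, if_neg (by omega : ¬ n = 0)]
  ring

/-- The `k`-sum collapse. -/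
lemma KS (d j m : ℕ) (hd : 1 ≤ d) :
    ∑ k ∈ range d, ((d + 1).choose k : ℚ) * ((-1) ^ (k - j) * (k.choose j : ℚ) * fQ (d - k) m)
      = ((d + 1).choose j : ℚ) * ((-1) ^ (d - j) * gg (d - j) m) := by
  rcases le_or_gt j d with hjd | hjd
  · -- terms with k < j vanish
    rw [Finset.range_eq_Ico, ← Finset.sum_Ico_consecutive _ (Nat.zero_le j) hjd]
    have z1 : ∑ k ∈ Finset.Ico 0 j, ((d + 1).choose k : ℚ) * ((-1) ^ (k - j) * (k.choose j : ℚ) * fQ (d - k) m) = 0 := by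
      refine Finset.sum_eq_zero fun k hk => ?_
      simp only [Finset.mem_Ico] at hk
      rw [Nat.choose_eq_zero_of_lt hk.2]
      simp
    rw [z1, zero_add, Finset.sum_Ico_eq_sum_range]
    have key : ∀ s ∈ range (d - j), ((d + 1).choose (j + s) : ℚ) * ((-1) ^ (j + s - j) * ((j + s).choose j : ℚ) * fQ (d - (j + s)) m)
        = ((d + 1).choose j : ℚ) * ((-1) ^ s * ((d - j + 1).choose s : ℚ) * fQ (d - j - s) m) := by
      intro s hs
      have e1 : j + s - j = s := by omega
      have e2 : d - (j + s) = d - j - s := by omega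
      have habs : ((d + 1).choose (j + s) : ℚ) * ((j + s).choose j : ℚ)
          = ((d + 1).choose j : ℚ) * ((d + 1 - j).choose s : ℚ) := by
        exact_mod_cast congrArg (fun z : ℕ => (z : ℚ)) (choose_absorb (d + 1) j s)
      have e3 : d + 1 - j = d - j + 1 := by omega
      rw [e3] at habs
      rw [e1, e2]
      calc ((d + 1).choose (j + s) : ℚ) * ((-1) ^ s * ((j + s).choose j : ℚ) * fQ (d - j - s) m)
          = (((d + 1).choose (j + s) : ℚ) * ((j + s).choose j : ℚ)) * ((-1) ^ s * fQ (d - j - s) m) := by ring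
        _ = (((d + 1).choose j : ℚ) * ((d - j + 1).choose s : ℚ)) * ((-1) ^ s * fQ (d - j - s) m) := by rw [habs]
        _ = _ := by ring
    rw [Finset.sum_congr rfl key]
    rcases le_or_gt (2 * m) (d - j) with h2m | h2m
    · have e4 : d - j + 1 = (d - j) + 1 := rfl
      have := TC m (d - j) h2m
      calc ∑ s ∈ range (d - j), ((d + 1).choose j : ℚ) * ((-1) ^ s * ((d - j + 1).choose s : ℚ) * fQ (d - j - s) m)
          = ((d + 1).choose j : ℚ) * ∑ s ∈ range (d - j), (-1 : ℚ) ^ s * (((d - j) + 1).choose s : ℚ) * fQ ((d - j) - s) m := by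
            rw [Finset.mul_sum]
        _ = ((d + 1).choose j : ℚ) * ((-1) ^ (d - j) * gg (d - j) m) := by
            rw [this, gg, if_pos h2m]
    · rw [gg, if_neg (by omega)]
      rw [Finset.sum_eq_zero]
      · ring
      intro s hs
      simp only [mem_range] at hs
      rw [fQ_zero (by omega) (Or.inr (by omega))]
      ring
  · -- j > d : both sides vanish
    rw [Finset.sum_eq_zero]
    · rcases Nat.lt_or_ge j (d + 2) with hj2 | hj2
      · have hj1 : j = d + 1 := by omega
        subst hj1
        have : d - (d + 1) = 0 := by omega
        rw [this, gg]
        rcases Nat.eq_zero_or_pos m with hm | hm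
        · subst hm
          norm_num
        · rw [if_neg (by omega)]
          ring
      · rw [Nat.choose_eq_zero_of_lt (by omega)]
        simp
    · intro k hk
      simp only [mem_range] at hk
      rw [Nat.choose_eq_zero_of_lt (by omega : k < j)]
      simp

/-- The key polynomial identity `(⋆)`. -/
lemma star {d : ℕ} (hd : 1 ≤ d) :
    (QQ d).reflect d
      = (∑ k ∈ range d, C (((d + 1).choose k : ℚ)) * (X + C (-1)) ^ k * QQ (d - k)) + chiQ d := by
  ext n
  rw [coeff_reflect, coeff_add, finset_sum_coeff]
  have hterm : ∀ k ∈ range d, (C (((d + 1).choose k : ℚ)) * (X + C (-1)) ^ k * QQ (d - k)).coeff n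
      = ∑ m ∈ range (n + 1), ((d + 1).choose k : ℚ) * (fQ (d - k) m * ((-1) ^ (k - (n - m)) * (k.choose (n - m) : ℚ))) := by
    intro k _
    rw [mul_assoc, coeff_C_mul, mul_comm ((X + C (-1) : ℚ[X]) ^ k) (QQ (d - k)), coeff_mul,
      Finset.Nat.sum_antidiagonal_eq_sum_range_succ_mk, Finset.mul_sum]
    refine Finset.sum_congr rfl fun m hm => ?_
    rw [QQ_coeff, coeff_X_add_C_pow]
  rw [Finset.sum_congr rfl hterm, Finset.sum_comm]
  have hKS : ∀ m ∈ range (n + 1),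
      ∑ k ∈ range d, ((d + 1).choose k : ℚ) * (fQ (d - k) m * ((-1) ^ (k - (n - m)) * (k.choose (n - m) : ℚ)))
        = ((d + 1).choose (n - m) : ℚ) * ((-1) ^ (d - (n - m)) * gg (d - (n - m)) m) := by
    intro m _
    rw [← KS d (n - m) m hd]
    refine Finset.sum_congr rfl fun k _ => ?_
    ring
  rw [Finset.sum_congr rfl hKS]
  rcases le_or_gt n d with hn | hn
  · rw [revAt_le hn, QQ_coeff, chiQ_coeff hd hn, ← mainId hd hn]
    congr 1
    refine Finset.sum_congr rfl fun m hm => ?_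
    simp only [mem_range] at hm
    rcases le_or_gt m n with hmn | hmn
    · have : d - (n - m) = d - n + m := by omega
      rw [this]
    · omega
  · -- n > d : all zero
    have hrev : revAt d n = n := by
      exact revAt_eq_self_of_lt hn
    rw [hrev, QQ_coeff, fQ_big hn, chiQ_coeff_big hn, add_zero]
    rw [Finset.sum_eq_zero]
    intro m hm
    simp only [mem_range] at hm
    rcases le_or_gt (n - m) d with hnm | hnm
    · have hEz : gg (d - (n - m)) m = 0 := by
        rw [gg, if_neg (by omega)]
      rw [hEz]
      ring
    · rcases Nat.lt_or_ge (n - m) (d + 2) with hj2 | hj2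
      · have hz : d - (n - m) = 0 := by omega
        rw [hz, gg]
        rcases Nat.eq_zero_or_pos m with hm0 | hm0
        · subst hm0
          norm_num
        · rw [if_neg (by omega)]
          ring
      · rw [Nat.choose_eq_zero_of_lt (by omega)]
        simp

open PreMatroid

/-- `M` is (isomorphic to) the uniform matroid `U_{1,d}`. -/
def IsU1 (d : ℕ) (M : PreMatroid ℕ) : Prop :=
  M.E.card = d + 1 ∧ ∀ A, M.r A = min (A ∩ M.E).card d

/-- `M` is a Boolean (free) matroid. -/
def IsBool (M : PreMatroid ℕ) : Prop := ∀ A, M.r A = (A ∩ M.E).card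

variable {M : PreMatroid ℕ} {d : ℕ}

lemma bool_flats (hB : IsBool M) : M.flats = M.E.powerset := by
  ext F
  simp only [PreMatroid.flats, mem_filter, mem_powerset, and_iff_left_iff_imp]
  intro hFE e heE heF
  rw [hB, hB, inter_eq_left.mpr hFE, inter_eq_left.mpr (insert_subset heE hFE),
    card_insert_of_notMem heF]
  omega

lemma mu_small (M : PreMatroid ℕ) : ∀ F : Finset ℕ, (∀ G, G ⊂ F → G ∈ M.flats) →
    M.mu F = (-1) ^ F.card := by
  intro F
  induction F using Finset.strongInduction with
  | _ F ih =>
    intro hF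
    rw [PreMatroid.mu]
    have hset : M.flats.filter (fun G => G ⊂ F) = F.powerset.erase F := by
      ext G
      simp only [mem_filter, mem_erase, mem_powerset]
      constructor
      · rintro ⟨_, hG⟩
        exact ⟨hG.ne, hG.subset⟩
      · rintro ⟨hne, hsub⟩
        have hss : G ⊂ F := HasSubset.Subset.ssubset_of_ne hsub hne
        exact ⟨hF G hss, hss⟩
    rcases Finset.eq_empty_or_nonempty F with h0 | hFne
    · subst h0
      rw [if_neg]
      · simp
      · rw [hset]
        simp
    · have hne : (M.flats.filter (fun G => G ⊂ F)).Nonempty := by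
        rw [hset]
        exact ⟨∅, mem_erase.mpr ⟨Ne.symm hFne.ne_empty, mem_powerset.mpr (empty_subset F)⟩⟩
      rw [if_pos hne, Finset.sum_attach (M.flats.filter (fun G => G ⊂ F)) (fun G => M.mu G),
        hset]
      have hsum : ∑ G ∈ F.powerset.erase F, M.mu G
          = ∑ G ∈ F.powerset.erase F, (-1 : ℤ) ^ G.card := by
        refine Finset.sum_congr rfl fun G hG => ?_
        simp only [mem_erase, mem_powerset] at hG
        have hss : G ⊂ F := HasSubset.Subset.ssubset_of_ne hG.2 hG.1
        exact ih G hss (fun H hH => hF H (hH.trans hss))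
      rw [hsum, Finset.sum_erase_eq_sub (mem_powerset_self F),
        Finset.sum_powerset_neg_one_pow_card, if_neg hFne.ne_empty]
      ring

lemma charPoly_bool (hB : IsBool M) : M.charPoly = (X + C (-1)) ^ M.E.card := by
  have hrk : M.rk = M.E.card := by rw [PreMatroid.rk, hB, inter_self]
  rw [PreMatroid.charPoly, bool_flats hB, Finset.powerset_card_biUnion,
    Finset.sum_biUnion (fun i _ j _ hij => M.E.pairwise_disjoint_powersetCard hij)]
  have hterm : ∀ j ∈ range (M.E.card + 1),
      (∑ F ∈ Finset.powersetCard j M.E, C (M.mu F) * X ^ (M.rk - M.r F))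
        = (M.E.card.choose j) • (C ((-1 : ℤ) ^ j) * X ^ (M.E.card - j)) := by
    intro j hj
    rw [← Finset.card_powersetCard j M.E, ← Finset.sum_const]
    refine Finset.sum_congr rfl fun F hF => ?_
    rw [Finset.mem_powersetCard] at hF
    have hmu : M.mu F = (-1) ^ j := by
      rw [← hF.2]
      refine mu_small M F fun G hG => ?_
      rw [bool_flats hB, mem_powerset]
      exact hG.subset.trans hF.1
    have hr : M.r F = j := by
      rw [hB, inter_eq_left.mpr hF.1, hF.2]
    rw [hmu, hr, hrk]
  rw [Finset.sum_congr rfl hterm, add_pow, ← Finset.sum_range_reflect]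
  refine Finset.sum_congr rfl fun j hj => ?_
  simp only [mem_range] at hj
  rw [Nat.add_sub_cancel]
  have e2 : M.E.card - (M.E.card - j) = j := by omega
  have e3 : M.E.card.choose (M.E.card - j) = M.E.card.choose j := Nat.choose_symm (by omega)
  rw [e2, e3, nsmul_eq_mul, map_pow]
  ring

lemma U1_rk (hu : IsU1 d M) : M.rk = d := by
  rw [PreMatroid.rk, hu.2, inter_self, hu.1]
  omega

lemma U1_mem_flats (hu : IsU1 d M) {F : Finset ℕ} :
    F ∈ M.flats ↔ F ⊆ M.E ∧ (F.card < d ∨ F = M.E) := by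
  simp only [PreMatroid.flats, mem_filter, mem_powerset]
  constructor
  · rintro ⟨hFE, hcond⟩
    refine ⟨hFE, ?_⟩
    by_cases hc : F.card < d
    · exact Or.inl hc
    · right
      by_contra hne
      obtain ⟨e, heE, heF⟩ := exists_of_ssubset (HasSubset.Subset.ssubset_of_ne hFE hne)
      have := hcond e heE heF
      rw [hu.2, hu.2, inter_eq_left.mpr hFE, inter_eq_left.mpr (insert_subset heE hFE),
        card_insert_of_notMem heF] at this
      omega
  · rintro ⟨hFE, hcase⟩
    refine ⟨hFE, fun e heE heF => ?_⟩
    rcases hcase with hc | rfl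
    · rw [hu.2, hu.2, inter_eq_left.mpr hFE, inter_eq_left.mpr (insert_subset heE hFE),
        card_insert_of_notMem heF]
      omega
    · exact absurd heE heF

lemma U1_flats (hu : IsU1 d M) :
    M.flats = insert M.E ((range d).biUnion fun j => Finset.powersetCard j M.E) := by
  ext F
  rw [U1_mem_flats hu]
  simp only [mem_insert, mem_biUnion, mem_range, Finset.mem_powersetCard]
  constructor
  · rintro ⟨hFE, hc | rfl⟩
    · exact Or.inr ⟨F.card, hc, hFE, rfl⟩
    · exact Or.inl rfl
  · rintro (rfl | ⟨j, hj, hFE, rfl⟩)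
    · exact ⟨Finset.Subset.refl _, Or.inr rfl⟩
    · exact ⟨hFE, Or.inl hj⟩

lemma E_not_mem_biUnion (hu : IsU1 d M) :
    M.E ∉ (range d).biUnion fun j => Finset.powersetCard j M.E := by
  simp only [mem_biUnion, mem_range, Finset.mem_powersetCard, not_exists]
  rintro j ⟨hj, -, hcard⟩
  rw [hu.1] at hcard
  omega

lemma pdisj (M : PreMatroid ℕ) (d : ℕ) :
    ((range d : Finset ℕ) : Set ℕ).PairwiseDisjoint (fun j => Finset.powersetCard j M.E) := by
  intro i _ j _ hij
  rw [Function.onFun, Finset.disjoint_left]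
  intro F hFi hFj
  rw [Finset.mem_powersetCard] at hFi hFj
  exact hij (hFi.2.symm.trans hFj.2)

lemma U1_mu_small (hu : IsU1 d M) {F : Finset ℕ} (hFE : F ⊆ M.E) (hFd : F.card < d) :
    M.mu F = (-1) ^ F.card := by
  refine mu_small M F fun G hG => ?_
  rw [U1_mem_flats hu]
  have := card_lt_card hG
  exact ⟨hG.subset.trans hFE, Or.inl (by omega)⟩

lemma U1_mu_top (hu : IsU1 d M) (hd : 1 ≤ d) : M.mu M.E = (-1) ^ d * d := by
  rw [PreMatroid.mu]
  have hset : M.flats.filter (fun G => G ⊂ M.E)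
      = (range d).biUnion fun j => Finset.powersetCard j M.E := by
    ext G
    simp only [mem_filter, mem_biUnion, mem_range, Finset.mem_powersetCard]
    constructor
    · rintro ⟨hGfl, hss⟩
      rw [U1_mem_flats hu] at hGfl
      rcases hGfl.2 with hc | rfl
      · exact ⟨G.card, hc, hGfl.1, rfl⟩
      · exact absurd hss (by exact ssubset_irrefl _)
    · rintro ⟨j, hj, hGE, rfl⟩
      refine ⟨(U1_mem_flats hu).mpr ⟨hGE, Or.inl hj⟩, HasSubset.Subset.ssubset_of_ne hGE ?_⟩
      intro hEq
      have := hu.1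
      rw [← hEq] at this
      omega
  have hne : (M.flats.filter (fun G => G ⊂ M.E)).Nonempty := by
    rw [hset]
    refine ⟨∅, ?_⟩
    simp only [mem_biUnion, mem_range, Finset.mem_powersetCard]
    exact ⟨0, by omega, empty_subset _, card_empty⟩
  rw [if_pos hne, Finset.sum_attach (M.flats.filter (fun G => G ⊂ M.E)) (fun G => M.mu G), hset,
    Finset.sum_biUnion (pdisj M d)]
  have hterm : ∀ j ∈ range d, (∑ G ∈ Finset.powersetCard j M.E, M.mu G)
      = ((d + 1).choose j) • ((-1 : ℤ) ^ j) := by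
    intro j hj
    simp only [mem_range] at hj
    rw [← hu.1, ← Finset.card_powersetCard j M.E, ← Finset.sum_const]
    refine Finset.sum_congr rfl fun G hG => ?_
    rw [Finset.mem_powersetCard] at hG
    obtain ⟨hGE, hGc⟩ := hG
    rw [U1_mu_small hu hGE (lt_of_eq_of_lt hGc hj), hGc]
  rw [Finset.sum_congr rfl hterm]
  have hA : ∑ j ∈ range d, ((d + 1).choose j) • ((-1 : ℤ) ^ j)
      = ∑ j ∈ range ((d - 1) + 1), (-1 : ℤ) ^ j * ((d + 1).choose j : ℤ) := by
    rw [(by omega : (d - 1) + 1 = d)]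
    refine Finset.sum_congr rfl fun j _ => ?_
    rw [nsmul_eq_mul]
    ring
  rw [hA, A1Z d (d - 1)]
  have hch : d.choose (d - 1) = d := by
    have h2 := Nat.choose_symm (show 1 ≤ d from hd)
    rwa [Nat.choose_one_right] at h2
  have hchZ : (d.choose (d - 1) : ℤ) = (d : ℤ) := by exact_mod_cast congrArg (fun z : ℕ => (z : ℤ)) hch
  rw [hchZ]
  have hp := pow_succ (-1 : ℤ) (d - 1)
  rw [(by omega : (d - 1) + 1 = d)] at hp
  rw [hp]
  ring

/-- The characteristic polynomial of a `U_{1,d}` matroid, over `ℤ`. -/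
noncomputable def chiZ (d : ℕ) : ℤ[X] :=
  (∑ j ∈ range d, C ((-1) ^ j * ((d + 1).choose j : ℤ)) * X ^ (d - j)) + C ((-1) ^ d * (d : ℤ))

lemma charPoly_U1 (hu : IsU1 d M) (hd : 1 ≤ d) : M.charPoly = chiZ d := by
  have hrk : M.rk = d := U1_rk hu
  rw [PreMatroid.charPoly, U1_flats hu, Finset.sum_insert (E_not_mem_biUnion hu),
    Finset.sum_biUnion (pdisj M d)]
  have hE : C (M.mu M.E) * X ^ (M.rk - M.r M.E) = C ((-1) ^ d * (d : ℤ)) := by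
    rw [U1_mu_top hu hd, hrk]
    have hrE : M.r M.E = d := by
      rw [hu.2, inter_self, hu.1]
      omega
    rw [hrE, Nat.sub_self, pow_zero, mul_one]
  have hterm : ∀ j ∈ range d, (∑ F ∈ Finset.powersetCard j M.E, C (M.mu F) * X ^ (M.rk - M.r F))
      = C ((-1) ^ j * ((d + 1).choose j : ℤ)) * X ^ (d - j) := by
    intro j hj
    simp only [mem_range] at hj
    have hconst : ∀ F ∈ Finset.powersetCard j M.E,
        C (M.mu F) * X ^ (M.rk - M.r F) = C ((-1 : ℤ) ^ j) * X ^ (d - j) := by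
      intro F hF
      rw [Finset.mem_powersetCard] at hF
      obtain ⟨hFE2, hFc⟩ := hF
      have hr : M.r F = j := by
        rw [hu.2, inter_eq_left.mpr hFE2, hFc]
        omega
      rw [U1_mu_small hu hFE2 (lt_of_eq_of_lt hFc hj), hFc, hr, hrk]
    rw [Finset.sum_congr rfl hconst, Finset.sum_const, Finset.card_powersetCard, hu.1,
      nsmul_eq_mul, Polynomial.C_mul, Polynomial.C_eq_natCast]
    ring
  rw [hE, Finset.sum_congr rfl hterm, chiZ, add_comm]

lemma chiZ_map (d : ℕ) : (chiZ d).map (Int.castRingHom ℚ) = chiQ d := by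
  rw [chiZ, chiQ, Polynomial.map_add, Polynomial.map_sum, Polynomial.map_C]
  congr 1
  · refine Finset.sum_congr rfl fun j _ => ?_
    rw [Polynomial.map_mul, Polynomial.map_pow, Polynomial.map_X, Polynomial.map_C]
    congr 1
    simp only [eq_intCast]
    push_cast
    ring
  · congr 1
    simp only [eq_intCast]
    push_cast
    ring

lemma loc_isBool (hu : IsU1 d M) {F : Finset ℕ} (hFE : F ⊆ M.E) (hFd : F.card < d) :
    IsBool (M.loc F) := by
  intro A
  show M.r (A ∩ F) = (A ∩ F).card
  rw [hu.2]
  have h1 : A ∩ F ∩ M.E = A ∩ F := inter_eq_left.mpr (inter_subset_right.trans hFE)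
  rw [h1, min_eq_left]
  exact le_of_lt (lt_of_le_of_lt (card_le_card inter_subset_right) hFd)

lemma loc_top_isU1 (hu : IsU1 d M) : IsU1 d (M.loc M.E) := by
  refine ⟨hu.1, fun A => ?_⟩
  show M.r (A ∩ M.E) = min ((A ∩ M.E).card) d
  rw [hu.2, inter_assoc, inter_self]

lemma con_isU1 (hu : IsU1 d M) {F : Finset ℕ} (hFE : F ⊆ M.E) (hFd : F.card ≤ d) :
    IsU1 (d - F.card) (M.con F) := by
  constructor
  · show (M.E \ F).card = d - F.card + 1
    rw [card_sdiff_of_subset hFE, hu.1]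
    have := card_le_card hFE
    omega
  · intro A
    show M.r ((A ∩ (M.E \ F)) ∪ F) - M.r F = min (A ∩ (M.E \ F)).card (d - F.card)
    have hrF : M.r F = F.card := by
      rw [hu.2, inter_eq_left.mpr hFE, min_eq_left hFd]
    have hsub : (A ∩ (M.E \ F)) ∪ F ⊆ M.E :=
      union_subset (inter_subset_right.trans sdiff_subset) hFE
    have hdisj : Disjoint (A ∩ (M.E \ F)) F :=
      disjoint_of_subset_left inter_subset_right sdiff_disjoint
    rw [hu.2, inter_eq_left.mpr hsub, card_union_of_disjoint hdisj, hrF]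
    omega

lemma con_top_rk : (M.con M.E).rk = 0 := by
  show M.r ((M.E \ M.E ∩ (M.E \ M.E)) ∪ M.E) - M.r M.E = 0
  simp

lemma key (P : KLfun) (hP : KLconds P) :
    ∀ d : ℕ, ∀ (M : PreMatroid ℕ) (h : M.IsMatroid), IsU1 d M →
      ∀ n : ℕ, ((P ℕ M h).coeff n : ℚ) = fQ d n := by
  intro d
  induction d using Nat.strong_induction_on with
  | _ d ih =>
  intro M h hu n
  rcases Nat.eq_zero_or_pos d with rfl | hd
  · have hrk : M.rk = 0 := U1_rk hu
    rw [(hP ℕ M h).1 hrk]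
    rcases Nat.eq_zero_or_pos n with rfl | hn
    · rw [Polynomial.coeff_one, if_pos rfl, fQ]
      norm_num
    · rw [Polynomial.coeff_one, if_neg (by omega), fQ_zero (by omega) (Or.inr hn)]
      norm_num
  · have hrk : M.rk = d := U1_rk hu
    have hdeg : 2 * (P ℕ M h).natDegree < d := by
      have := (hP ℕ M h).2.1 (by rw [hrk]; omega)
      rwa [hrk] at this
    rcases le_or_gt d (2 * n) with h2n | h2n
    · rw [Polynomial.coeff_eq_zero_of_natDegree_lt (by omega), fQ_zero h2n (Or.inl hd)]
      norm_num
    -- main case: 2n < d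
    set g : Finset ℕ → ℤ[X] := fun F =>
      if hF : F ⊆ M.E then (M.loc F).charPoly * P ℕ (M.con F) (h.con hF) else 0 with hg
    have EQ := (hP ℕ M h).2.2
    rw [hrk] at EQ
    have hattach : (∑ F ∈ M.flats.attach,
        (M.loc F.1).charPoly * P ℕ (M.con F.1) (h.con (subset_of_mem_flats F.2)))
        = ∑ F ∈ M.flats, g F := by
      rw [← Finset.sum_attach M.flats g]
      refine Finset.sum_congr rfl fun F _ => ?_
      simp only [hg]
      rw [dif_pos (subset_of_mem_flats F.2)]
    rw [hattach, U1_flats hu, Finset.sum_insert (E_not_mem_biUnion hu),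
      Finset.sum_biUnion (pdisj M d)] at EQ
    have EQc := congrArg (fun p : ℤ[X] => ((p.coeff (d - n) : ℤ) : ℚ)) EQ
    simp only [coeff_reflect, coeff_add, finset_sum_coeff, Int.cast_add, Int.cast_sum] at EQc
    rw [revAt_le (by omega : d - n ≤ d), (by omega : d - (d - n) = n)] at EQc
    have hgE : g M.E = chiZ d := by
      simp only [hg]
      rw [dif_pos (Finset.Subset.refl M.E), charPoly_U1 (loc_top_isU1 hu) hd,
        (hP ℕ (M.con M.E) (h.con (Finset.Subset.refl M.E))).1 con_top_rk, mul_one]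
    have hgEc : (((g M.E).coeff (d - n) : ℤ) : ℚ) = (chiQ d).coeff (d - n) := by
      rw [hgE, ← chiZ_map, Polynomial.coeff_map]
      simp [eq_intCast]
    have hgroup : ∀ j ∈ range d, (∑ F ∈ Finset.powersetCard j M.E, (((g F).coeff (d - n) : ℤ) : ℚ))
        = (Polynomial.C (((d + 1).choose j : ℚ)) * (X + Polynomial.C (-1)) ^ j * QQ (d - j)).coeff (d - n) := by
      intro j hj
      simp only [mem_range] at hj
      rcases Nat.eq_zero_or_pos j with rfl | hj1
      · rw [Finset.powersetCard_zero, Finset.sum_singleton]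
        have hcon : IsU1 d (M.con ∅) := by
          have := con_isU1 hu (empty_subset M.E) (by simp : (∅ : Finset ℕ).card ≤ d)
          simpa using this
        have hrk0 : (M.con ∅).rk = d := U1_rk hcon
        have hdeg0 : 2 * (P ℕ (M.con ∅) (h.con (empty_subset M.E))).natDegree < d := by
          have := (hP ℕ (M.con ∅) (h.con (empty_subset M.E))).2.1 (by rw [hrk0]; omega)
          rwa [hrk0] at this
        have hchar : (M.loc (∅ : Finset ℕ)).charPoly = 1 := by
          have hB : IsBool (M.loc (∅ : Finset ℕ)) := by
            intro A
            show M.r (A ∩ ∅) = (A ∩ (∅ : Finset ℕ)).card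
            rw [hu.2]
            simp
          rw [charPoly_bool hB]
          show (X + Polynomial.C (-1 : ℤ)) ^ (∅ : Finset ℕ).card = 1
          simp
        simp only [hg]
        rw [dif_pos (empty_subset M.E), hchar, one_mul,
          Polynomial.coeff_eq_zero_of_natDegree_lt (by omega)]
        rw [pow_zero, mul_one, Nat.choose_zero_right, Nat.sub_zero, Nat.cast_one,
          Polynomial.C_1, one_mul, QQ_coeff, fQ_zero (by omega) (Or.inl hd)]
        norm_num
      · have hconst : ∀ F ∈ Finset.powersetCard j M.E,
            (((g F).coeff (d - n) : ℤ) : ℚ)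
              = ((X + Polynomial.C (-1 : ℚ)) ^ j * QQ (d - j)).coeff (d - n) := by
          intro F hF
          rw [Finset.mem_powersetCard] at hF
          obtain ⟨hFE, hFc⟩ := hF
          simp only [hg]
          rw [dif_pos hFE]
          have hmap : ((((M.loc F).charPoly * P ℕ (M.con F) (h.con hFE)).coeff (d - n) : ℤ) : ℚ)
              = (((M.loc F).charPoly * P ℕ (M.con F) (h.con hFE)).map (Int.castRingHom ℚ)).coeff (d - n) := by
            rw [Polynomial.coeff_map]
            simp [eq_intCast]
          rw [hmap, Polynomial.map_mul]
          have h1 : (M.loc F).charPoly = (X + Polynomial.C (-1 : ℤ)) ^ j := by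
            rw [charPoly_bool (loc_isBool hu hFE (lt_of_eq_of_lt hFc hj))]
            show (X + Polynomial.C (-1 : ℤ)) ^ F.card = _
            rw [hFc]
          have h2 : (P ℕ (M.con F) (h.con hFE)).map (Int.castRingHom ℚ) = QQ (d - j) := by
            apply Polynomial.ext
            intro k
            rw [Polynomial.coeff_map, QQ_coeff]
            have hcon : IsU1 (d - j) (M.con F) := by
              have := con_isU1 hu hFE (by omega : F.card ≤ d)
              rwa [hFc] at this
            have hihk := ih (d - j) (by omega) (M.con F) (h.con hFE) hcon k
            rw [← hihk]
            simp [eq_intCast]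
          rw [h1, h2, Polynomial.map_pow, Polynomial.map_add, Polynomial.map_X, Polynomial.map_C]
          simp only [eq_intCast, Int.cast_neg, Int.cast_one]
        rw [Finset.sum_congr rfl hconst, Finset.sum_const, Finset.card_powersetCard, hu.1,
          mul_assoc, Polynomial.coeff_C_mul, nsmul_eq_mul]
    have hstar := congrArg (fun p : ℚ[X] => p.coeff (d - n)) (star hd)
    simp only [coeff_reflect, coeff_add, finset_sum_coeff] at hstar
    rw [revAt_le (by omega : d - n ≤ d), (by omega : d - (d - n) = n), QQ_coeff] at hstar
    rw [EQc, hgEc, Finset.sum_congr rfl hgroup, hstar]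
    ring

end KLaux

/-- For `d > 0`, the Kazhdan-Lusztig polynomial of the uniform matroid
`U_{1,d}` is `P_{U_{1,d}}(t) = ∑_{i ≥ 0} (1/(i+1)) C(d-i-1, i) C(d+1, i) t^i`. -/
theorem kl_uniform_one (P : KLfun) (hP : KLconds P) (d : ℕ) (hd : 0 < d) (i : ℕ) :
    ((P ℕ (uniformPre 1 d) (uniformPre_isMatroid 1 d)).coeff i : ℚ) =
      (1 / (i + 1) : ℚ) * ((d - i - 1).choose i) * ((d + 1).choose i) := by
  have hu : KLaux.IsU1 d (uniformPre 1 d) := by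
    constructor
    · show (Finset.range (1 + d)).card = d + 1
      rw [Finset.card_range]
      omega
    · intro A
      rfl
  have hk := KLaux.key P hP d (uniformPre 1 d) (uniformPre_isMatroid 1 d) hu i
  rw [hk, KLaux.fQ]
  ring
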